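/- For any unitary matrices U and V on the same finite-dimensional complex Hilbert space, |α(U) − α(V)| ≤ π · ‖U − V‖. -/

import Mathlib

open Matrix
open scoped Matrix.Norms.L2Operator Kronecker ComplexOrder

noncomputable section

/-- Maximum argument (taken in `(-π, π]`) of the eigenvalues of a matrix. -/
noncomputable def argMaxSpec {n : ℕ} (U : Matrix (Fin n) (Fin n) ℂ) : ℝ :=
  sSup (Complex.arg '' spectrum ℂ U)

/-- Minimum argument (taken in `(-π, π]`) of the eigenvalues of a matrix. -/
noncomputable def argMinSpec {n : ℕ} (U : Matrix (Fin n) (Fin n) ℂ) : ℝ :=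
  sInf (Complex.arg '' spectrum ℂ U)

/-- Length `α̃(U)` of the shortest arc of the unit circle containing all eigenvalues of `U`. -/
noncomputable def arcLength {n : ℕ} (U : Matrix (Fin n) (Fin n) ℂ) : ℝ :=
  sInf { L : ℝ | 0 ≤ L ∧ ∃ θ : ℝ, ∀ z ∈ spectrum ℂ U, ∃ φ : ℝ,
    θ ≤ φ ∧ φ ≤ θ + L ∧ z = Complex.exp (φ * Complex.I) }

/-- The phase range `α(U) = min {π, α̃(U)}`. -/
noncomputable def phaseRange {n : ℕ} (U : Matrix (Fin n) (Fin n) ℂ) : ℝ :=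
  min Real.pi (arcLength U)

/- ## Auxiliary lemmas -/

open scoped ENNReal NNReal

/-- Spectral perturbation: eigenvalues of `b` are close to the spectrum of a normal `a`. -/
lemma aux_dist_spectrum_le {A : Type*} [CStarAlgebra A] [Nontrivial A] (a b : A)
    [IsStarNormal a] {μ : ℂ} (hμ : μ ∈ spectrum ℂ b) :
    ∃ ν ∈ spectrum ℂ a, dist μ ν ≤ ‖a - b‖ := by
  obtain ⟨ν, hν, hd⟩ := (spectrum.isCompact (𝕜 := ℂ) a).exists_infDist_eq_dist
    (spectrum.nonempty a) μ
  refine ⟨ν, hν, ?_⟩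
  by_contra hlt
  push_neg at hlt
  rw [← hd] at hlt
  set d := Metric.infDist μ (spectrum ℂ a) with hddef
  have hd0 : 0 < d := lt_of_le_of_lt (norm_nonneg _) hlt
  have hμa : μ ∉ spectrum ℂ a := fun h => by
    have : d = 0 := by rw [hddef]; exact Metric.infDist_zero_of_mem h
    linarith
  have hunit : IsUnit (algebraMap ℂ A μ - a) := spectrum.notMem_iff.mp hμa
  obtain ⟨u, hu⟩ := hunit
  have hnorm : IsStarNormal (algebraMap ℂ A μ - a) := by
    constructor
    have h := star_comm_self' a
    simp only [star_sub, ← algebraMap_star_comm]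
    rw [Commute, SemiconjBy]
    simp only [sub_mul, mul_sub]
    rw [h, Algebra.commutes μ (star a), Algebra.commutes (star μ) a,
      Algebra.commutes μ ((algebraMap ℂ A) (star μ))]
    abel
  have hnormu : IsStarNormal ((↑u⁻¹ : A)) := by
    constructor
    have h : Commute ((star u : Aˣ) : A) (u : A) := by
      rw [Units.coe_star, hu]; exact hnorm.star_comm_self
    have h2 := (h.units_inv_left).units_inv_right
    rw [Commute, SemiconjBy, ← Units.coe_star_inv]
    exact h2
  have hb : ‖(↑u⁻¹ : A)‖ ≤ d⁻¹ := by
    have hsr := IsStarNormal.spectralRadius_eq_nnnorm (↑u⁻¹ : A)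
    have hsup : spectralRadius ℂ (↑u⁻¹ : A) ≤ ENNReal.ofReal d⁻¹ := by
      rw [spectralRadius]
      refine iSup₂_le fun k hk => ?_
      have hk0 : k ≠ 0 := by
        intro h0
        rw [h0] at hk
        exact spectrum.zero_notMem ℂ (u⁻¹).isUnit hk
      obtain ⟨k', rfl⟩ := IsUnit.mk0 k hk0
      have hkinv : ((k'⁻¹ : ℂˣ) : ℂ) ∈ spectrum ℂ ((↑u⁻¹⁻¹ : A)) := spectrum.inv_mem_iff.mp hk
      rw [inv_inv, hu, ← spectrum.singleton_sub_eq] at hkinv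
      obtain ⟨x, hx, y, hy, hxy⟩ := hkinv
      rw [Set.mem_singleton_iff] at hx
      rw [hx] at hxy
      have hdist : d ≤ ‖((k'⁻¹ : ℂˣ) : ℂ)‖ := by
        rw [← hxy]
        calc d ≤ dist μ y := Metric.infDist_le_dist_of_mem hy
          _ = ‖μ - y‖ := by rw [dist_eq_norm]
      have : ‖(↑k' : ℂ)‖ ≤ d⁻¹ := by
        rw [Units.val_inv_eq_inv_val k', norm_inv] at hdist
        rw [← inv_inv ‖(↑k' : ℂ)‖]
        exact inv_anti₀ hd0 hdist
      rw [← enorm_eq_nnnorm, ← ofReal_norm]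
      exact ENNReal.ofReal_le_ofReal this
    rw [hsr] at hsup
    rw [← enorm_eq_nnnorm, ← ofReal_norm] at hsup
    exact (ENNReal.ofReal_le_ofReal_iff (inv_nonneg.mpr hd0.le)).mp hsup
  have hsmall : ‖(↑u⁻¹ : A) * (b - a)‖ < 1 := by
    calc ‖(↑u⁻¹ : A) * (b - a)‖ ≤ ‖(↑u⁻¹ : A)‖ * ‖b - a‖ := norm_mul_le _ _
      _ ≤ d⁻¹ * ‖a - b‖ := by
          rw [norm_sub_rev]
          exact mul_le_mul_of_nonneg_right hb (norm_nonneg _)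
      _ < d⁻¹ * d := (mul_lt_mul_iff_right₀ (by positivity)).mpr hlt
      _ = 1 := inv_mul_cancel₀ (ne_of_gt hd0)
  have hb_unit : IsUnit (algebraMap ℂ A μ - b) := by
    have key : algebraMap ℂ A μ - b = (u : A) * (1 - (↑u⁻¹ : A) * (b - a)) := by
      rw [mul_sub, mul_one, ← mul_assoc, Units.mul_inv, one_mul, hu]
      abel
    rw [key]
    exact u.isUnit.mul (Units.oneSub _ hsmall).isUnit
  exact (spectrum.notMem_iff.mpr hb_unit) hμ

open Complex in
lemma aux_chord_eq (a b : ℝ) :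
    ‖Complex.exp (a * Complex.I) - Complex.exp (b * Complex.I)‖
      = 2 * |Real.sin ((a - b) / 2)| := by
  have key : Complex.exp (a * I) - Complex.exp (b * I)
      = Complex.exp ((((a + b) / 2 : ℝ)) * I) *
        (Complex.exp ((((a - b) / 2 : ℝ)) * I) - Complex.exp ((-((a - b) / 2) : ℝ) * I)) := by
    rw [mul_sub, ← Complex.exp_add, ← Complex.exp_add]
    push_cast
    ring_nf
  rw [key, norm_mul, Complex.norm_exp_ofReal_mul_I,
    one_mul]
  have h2 : Complex.exp ((((a - b) / 2 : ℝ)) * I) - Complex.exp ((-((a - b) / 2) : ℝ) * I)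
      = (2 * Real.sin ((a - b) / 2) : ℝ) * I := by
    rw [Complex.exp_mul_I, Complex.exp_mul_I]
    push_cast
    rw [Complex.cos_neg, Complex.sin_neg]
    ring
  rw [h2]
  rw [norm_mul, Complex.norm_I, mul_one, Complex.norm_real, Real.norm_eq_abs]
  rw [abs_mul]
  norm_num

lemma aux_exists_close_angle {a b ε : ℝ}
    (h : ‖Complex.exp (a * Complex.I) - Complex.exp (b * Complex.I)‖ ≤ ε) :
    ∃ ψ : ℝ, |ψ - b| ≤ Real.pi * ε / 2 ∧
      Complex.exp (ψ * Complex.I) = Complex.exp (a * Complex.I) := by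
  rw [aux_chord_eq] at h
  set t := (a - b) / 2 with ht
  set k := round (t / Real.pi) with hk
  set t' := t - k * Real.pi with ht'
  have hpi := Real.pi_pos
  have ht'le : |t'| ≤ Real.pi / 2 := by
    have := abs_sub_round (t / Real.pi)
    have h1 : |t / Real.pi - k| * Real.pi ≤ (1/2) * Real.pi :=
      mul_le_mul_of_nonneg_right this hpi.le
    calc |t'| = |t / Real.pi - k| * Real.pi := by
          rw [← abs_of_pos hpi, ← abs_mul]
          rw [abs_of_pos hpi, ht']
          field_simp
      _ ≤ (1/2) * Real.pi := h1
      _ = Real.pi / 2 := by ring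
  have hsin : |Real.sin t'| = |Real.sin t| := by
    have h5 : Real.sin (t' + k * Real.pi) = (-1) ^ k * Real.sin t' := Real.sin_add_int_mul_pi t' k
    rw [show t' + k * Real.pi = t by rw [ht']; ring] at h5
    rw [h5, abs_mul]
    have habs1 : |((-1 : ℝ) ^ k)| = 1 := by
      rcases Int.even_or_odd k with he | ho
      · rw [he.neg_one_zpow]; norm_num
      · rw [ho.neg_one_zpow]; norm_num
    rw [habs1, one_mul]
  have hbound : 2 / Real.pi * |t'| ≤ |Real.sin t'| :=
    Real.mul_abs_le_abs_sin ht'le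
  have ht'small : |t'| ≤ Real.pi * ε / 4 := by
    have h' : 2 * |Real.sin t| ≤ ε := h
    have : 2 / Real.pi * |t'| ≤ ε / 2 := by
      rw [hsin] at hbound
      linarith
    calc |t'| = (Real.pi / 2) * (2 / Real.pi * |t'|) := by field_simp
      _ ≤ (Real.pi / 2) * (ε / 2) := mul_le_mul_of_nonneg_left this (by positivity)
      _ = Real.pi * ε / 4 := by ring
  refine ⟨a - 2 * k * Real.pi, ?_, ?_⟩
  · have : a - 2 * k * Real.pi - b = 2 * t' := by rw [ht', ht]; ring
    rw [this, abs_mul, abs_two]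
    linarith
  · rw [Complex.ofReal_sub]
    push_cast
    rw [sub_mul, Complex.exp_sub]
    rw [show ((2 : ℂ) * (k : ℂ) * (Real.pi : ℂ) * Complex.I)
        = (k : ℤ) * (2 * Real.pi * Complex.I) by push_cast; ring]
    rw [Complex.exp_int_mul_two_pi_mul_I]
    simp

/-- The `CStarAlgebra` structure on matrices coming from the `L2` operator norm. -/
noncomputable def auxMatrixCStar (n : ℕ) : CStarAlgebra (Matrix (Fin n) (Fin n) ℂ) :=
  { Matrix.instL2OpNormedRing, (Matrix.instL2OpNormedAlgebra : NormedAlgebra ℂ _),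
    Matrix.instCStarRing, (inferInstance : StarRing (Matrix (Fin n) (Fin n) ℂ)),
    (inferInstance : StarModule ℂ (Matrix (Fin n) (Fin n) ℂ)) with
    complete := (inferInstance : CompleteSpace (Matrix (Fin n) (Fin n) ℂ)).complete }

lemma aux_arcLength_nonneg {n : ℕ} (U : Matrix (Fin n) (Fin n) ℂ) : 0 ≤ arcLength U :=
  Real.sInf_nonneg fun _ hL => hL.1

lemma aux_two_pi_mem {n : ℕ} (U : Matrix (Fin n) (Fin n) ℂ)
    (hU : U ∈ Matrix.unitaryGroup (Fin n) ℂ) :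
    (2 * Real.pi) ∈ { L : ℝ | 0 ≤ L ∧ ∃ θ : ℝ, ∀ z ∈ spectrum ℂ U, ∃ φ : ℝ,
      θ ≤ φ ∧ φ ≤ θ + L ∧ z = Complex.exp (φ * Complex.I) } := by
  letI := auxMatrixCStar n
  refine ⟨by positivity, -Real.pi, fun z hz => ?_⟩
  have h1 : z ∈ Metric.sphere (0 : ℂ) 1 := spectrum.subset_circle_of_unitary hU hz
  rw [mem_sphere_zero_iff_norm] at h1
  refine ⟨Complex.arg z, (Complex.neg_pi_lt_arg z).le, by linarith [Complex.arg_le_pi z], ?_⟩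
  have h6 := Complex.norm_mul_exp_arg_mul_I z
  rw [h1, Complex.ofReal_one, one_mul]
    at h6
  exact h6.symm

lemma aux_arcLength_le {n : ℕ} (hn : n ≠ 0) (U V : Matrix (Fin n) (Fin n) ℂ)
    (hU : U ∈ Matrix.unitaryGroup (Fin n) ℂ) (hV : V ∈ Matrix.unitaryGroup (Fin n) ℂ) :
    arcLength V ≤ arcLength U + Real.pi * ‖U - V‖ := by
  letI := auxMatrixCStar n
  haveI : Nonempty (Fin n) := ⟨⟨0, Nat.pos_of_ne_zero hn⟩⟩
  haveI : Nontrivial (Matrix (Fin n) (Fin n) ℂ) := inferInstance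
  haveI : IsStarNormal U := isStarNormal_of_mem_unitary hU
  set ε := ‖U - V‖ with hε
  have hε0 : 0 ≤ ε := norm_nonneg _
  have hpi := Real.pi_pos
  have key : ∀ L ∈ { L : ℝ | 0 ≤ L ∧ ∃ θ : ℝ, ∀ z ∈ spectrum ℂ U, ∃ φ : ℝ,
      θ ≤ φ ∧ φ ≤ θ + L ∧ z = Complex.exp (φ * Complex.I) },
      arcLength V ≤ L + Real.pi * ε := by
    rintro L ⟨hL0, θ, hθ⟩
    have hmem : (L + Real.pi * ε) ∈ { L : ℝ | 0 ≤ L ∧ ∃ θ : ℝ, ∀ z ∈ spectrum ℂ V, ∃ φ : ℝ,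
        θ ≤ φ ∧ φ ≤ θ + L ∧ z = Complex.exp (φ * Complex.I) } := by
      refine ⟨by positivity, θ - Real.pi * ε / 2, fun z hz => ?_⟩
      obtain ⟨ν, hν, hdist⟩ := @aux_dist_spectrum_le _ _ _ U V (isStarNormal_of_mem_unitary hU) _ hz
      obtain ⟨φ, hφ1, hφ2, hφ3⟩ := hθ ν hν
      have hz1 : ‖z‖ = 1 := by
        have := spectrum.subset_circle_of_unitary hV hz
        rwa [mem_sphere_zero_iff_norm] at this
      have hzexp : z = Complex.exp ((Complex.arg z : ℝ) * Complex.I) := by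
        have h := Complex.norm_mul_exp_arg_mul_I z
        rw [hz1, Complex.ofReal_one,
          one_mul] at h
        exact h.symm
      have hchord : ‖Complex.exp ((Complex.arg z : ℝ) * Complex.I)
          - Complex.exp (φ * Complex.I)‖ ≤ ε := by
        rw [← hzexp, ← hφ3, ← dist_eq_norm]
        exact hdist
      obtain ⟨ψ, hψ1, hψ2⟩ := aux_exists_close_angle hchord
      refine ⟨ψ, ?_, ?_, ?_⟩
      · have := abs_le.mp hψ1
        linarith [this.1]
      · have := abs_le.mp hψ1
        linarith [this.2]
      · rw [hψ2, ← hzexp]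
    rw [arcLength]
    exact csInf_le ⟨0, fun x hx => hx.1⟩ hmem
  have hne : { L : ℝ | 0 ≤ L ∧ ∃ θ : ℝ, ∀ z ∈ spectrum ℂ U, ∃ φ : ℝ,
      θ ≤ φ ∧ φ ≤ θ + L ∧ z = Complex.exp (φ * Complex.I) }.Nonempty :=
    ⟨2 * Real.pi, aux_two_pi_mem U hU⟩
  have h2 : arcLength V - Real.pi * ε ≤ arcLength U :=
    le_csInf hne fun L hL => by linarith [key L hL]
  linarith

/-- `|α(U) - α(V)| ≤ π ‖U - V‖` for unitaries `U, V`. -/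
theorem abs_phaseRange_sub_le {n : ℕ} (U V : Matrix (Fin n) (Fin n) ℂ)
    (hU : U ∈ Matrix.unitaryGroup (Fin n) ℂ) (hV : V ∈ Matrix.unitaryGroup (Fin n) ℂ) :
    |phaseRange U - phaseRange V| ≤ Real.pi * ‖U - V‖ := by
  rcases Nat.eq_zero_or_pos n with hn | hn
  · subst hn
    have hUV : U = V := Subsingleton.elim U V
    rw [hUV, sub_self, abs_zero, sub_self]
    simp [norm_zero]
  · have hn' : n ≠ 0 := Nat.pos_iff_ne_zero.mp hn
    have h1 := aux_arcLength_le hn' U V hU hV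
    have h2 := aux_arcLength_le hn' V U hV hU
    rw [norm_sub_rev] at h2
    have hlip : ∀ x y : ℝ, min Real.pi x - min Real.pi y ≤ |x - y| := by
      intro x y
      rcases le_total Real.pi x with hx | hx <;> rcases le_total Real.pi y with hy | hy
      · rw [min_eq_left hx, min_eq_left hy]; simp [abs_nonneg]
      · rw [min_eq_left hx, min_eq_right hy]
        rcases abs_cases (x - y) with h | h <;> linarith
      · rw [min_eq_right hx, min_eq_left hy]
        rcases abs_cases (x - y) with h | h <;> linarith
      · rw [min_eq_right hx, min_eq_right hy]
        exact le_abs_self _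
    have habs : |arcLength U - arcLength V| ≤ Real.pi * ‖U - V‖ :=
      abs_le.mpr ⟨by linarith, by linarith⟩
    rw [phaseRange, phaseRange]
    refine abs_le.mpr ⟨?_, ?_⟩
    · have := hlip (arcLength V) (arcLength U)
      rw [abs_sub_comm] at habs
      have h3 := (abs_le.mp habs).2
      linarith
    · have := hlip (arcLength U) (arcLength V)
      have h3 := (abs_le.mp habs).2
      linarith
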